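/- Let M be a nonzero module over A = k[x_1,…,x_n] equipped with an AV-module structure π, and suppose M is finitely generated as an A-module. Then the sequence of variables x_1, …, x_n is an M-regular sequence: for each i with 1 ≤ i ≤ n, multiplication by x_i is injective on the quotient M/(x_1·M + ⋯ + x_{i−1}·M), and M/(x_1·M + ⋯ + x_n·M) ≠ 0. -/

import Mathlib

open MvPolynomial

attribute [local instance 100] LieRing.ofAssociativeRing

section Helpers

variable {k : Type*} [Field k] [CharZero k] {σ : Type*} [DecidableEq σ]


theorem my_coeff_pderiv (i : σ) (f : MvPolynomial σ k) (m : σ →₀ ℕ) :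
    coeff m (pderiv i f) = (m i + 1 : ℕ) * coeff (m + Finsupp.single i 1) f := by
  induction f using MvPolynomial.induction_on' with
  | add p q hp hq => simp [hp, hq, mul_add]
  | monomial s a =>
    rw [pderiv_monomial, coeff_monomial, coeff_monomial]
    by_cases h : s = m + Finsupp.single i 1
    · subst h
      rw [if_pos (add_tsub_cancel_right _ _)]
      simp [Finsupp.add_apply, mul_comm]
    · rw [if_neg h]
      by_cases h2 : s - Finsupp.single i 1 = m
      · have hsi : s i = 0 := by
          by_contra hne
          apply h
          rw [← h2, tsub_add_cancel_of_le]
          rw [Finsupp.single_le_iff]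
          omega
        rw [if_pos h2, hsi]
        simp
      · rw [if_neg h2, mul_zero]

theorem my_exists_const (P : MvPolynomial σ k → Prop)
    (hcl : ∀ g, P g → ∀ i, P (pderiv i g))
    (f : MvPolynomial σ k) (hf : f ≠ 0) (hPf : P f) :
    ∃ c : k, c ≠ 0 ∧ P (C c) := by
  generalize hd : f.totalDegree = d
  induction d using Nat.strong_induction_on generalizing f with
  | _ d ih =>
  rcases Nat.eq_zero_or_pos d with h0 | hpos
  · subst h0
    have hC : f = C (coeff 0 f) := by
      ext m
      rcases eq_or_ne m 0 with rfl | hm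
      · simp
      · rw [coeff_C, if_neg (Ne.symm hm)]
        by_contra hc
        apply hm
        ext x
        exact ((totalDegree_eq_zero_iff σ f).mp hd) m (by simpa using hc) x
    refine ⟨coeff 0 f, fun hc => hf ?_, hC ▸ hPf⟩
    rw [hC, hc, map_zero]
  · obtain ⟨d0, hd0supp, hd0⟩ := f.support.exists_mem_eq_sup
      (support_nonempty.mpr hf) (fun s => s.sum fun _ e => e)
    have hdeq : (d0.sum fun _ e => e) = d := by rw [← hd, totalDegree, hd0]
    have hd0ne : d0 ≠ 0 := by
      intro h; rw [h] at hdeq; simp at hdeq; omega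
    obtain ⟨i, hi⟩ : ∃ i, d0 i ≠ 0 := by
      by_contra h
      push_neg at h
      exact hd0ne (Finsupp.ext h)
    set g := pderiv i f with hg
    have hcoeff : coeff (d0 - Finsupp.single i 1) g ≠ 0 := by
      rw [hg, my_coeff_pderiv]
      have h1 : d0 - Finsupp.single i 1 + Finsupp.single i 1 = d0 :=
        tsub_add_cancel_of_le (by rw [Finsupp.single_le_iff]; omega)
      rw [h1]
      have h2 : ((d0 - Finsupp.single i 1 : σ →₀ ℕ)) i + 1 = d0 i := by
        rw [Finsupp.tsub_apply, Finsupp.single_apply, if_pos rfl]; omega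
      rw [h2]
      exact mul_ne_zero (Nat.cast_ne_zero.mpr hi) (mem_support_iff.mp hd0supp)
    have hgne : g ≠ 0 := fun h => hcoeff (by rw [h, coeff_zero])
    have hglt : g.totalDegree < d := by
      rw [totalDegree]
      rw [Finset.sup_lt_iff (by simpa using hpos : (⊥ : ℕ) < d)]
      intro m hm
      have : coeff (m + Finsupp.single i 1) f ≠ 0 := by
        intro h
        apply mem_support_iff.mp hm
        rw [hg, my_coeff_pderiv, h, mul_zero]
      have hmem := mem_support_iff.mpr this
      have : ((m + Finsupp.single i 1).sum fun _ e => e) ≤ d := by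
        rw [← hd, totalDegree]
        exact Finset.le_sup (f := fun s => s.sum fun _ e => e) hmem
      rw [Finsupp.sum_add_index' (fun _ => rfl) (fun _ _ _ => rfl)] at this
      simp only [Finsupp.sum_single_index] at this
      omega
    exact ih g.totalDegree hglt g hgne (hcl f hPf i) rfl

end Helpers


universe u₁ u₂ u₃

theorem my_krull {R : Type u₂} {N : Type u₃} [CommRing R] [IsNoetherianRing R]
    [AddCommGroup N] [Module R N] [Module.Finite R N] (x : R) (s : N)
    (hmem : ∀ j : ℕ, s ∈ (Ideal.span {x} ^ j • ⊤ : Submodule R N)) :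
    ∃ q : R, (q * x) • s = s := by
  haveI : IsNoetherianRing (ULift.{u₃} R) :=
    isNoetherianRing_of_ringEquiv R ULift.ringEquiv.symm
  haveI : IsScalarTower R (ULift.{u₃} R) (ULift.{u₂} N) :=
    ⟨fun r a n => by
      cases a with | up b => cases n with | up m =>
      exact congrArg ULift.up (smul_assoc r b m)⟩
  haveI : Module.Finite R (ULift.{u₂} N) := Module.Finite.equiv ULift.moduleEquiv.symm
  haveI : Module.Finite (ULift.{u₃} R) (ULift.{u₂} N) :=
    Module.Finite.of_restrictScalars_finite R _ _
  have hsmul : ∀ (r : R) (n : N), (ULift.up.{u₃} r) • (ULift.up.{u₂} n) = ULift.up (r • n) :=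
    fun r n => rfl
  have hIdeal : ∀ j : ℕ, ∀ y ∈ Ideal.span {x} ^ j,
      (ULift.up.{u₃} y) ∈ Ideal.span {ULift.up.{u₃} x} ^ j := by
    intro j y hy
    have : Ideal.map (ULift.ringEquiv.symm : R ≃+* ULift.{u₃} R).toRingHom
        (Ideal.span {x} ^ j) = Ideal.span {ULift.up.{u₃} x} ^ j := by
      rw [Ideal.map_pow, Ideal.map_span, Set.image_singleton]
      rfl
    rw [← this]
    exact Ideal.mem_map_of_mem _ hy
  have hmem' : ULift.up.{u₂} s ∈
      ⨅ j : ℕ, (Ideal.span {ULift.up.{u₃} x} ^ j • ⊤ : Submodule (ULift.{u₃} R) (ULift.{u₂} N)) := by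
    rw [Submodule.mem_iInf]
    intro j
    refine Submodule.smul_induction_on (hmem j) (fun r hr n _ => ?_) (fun a b ha hb => ?_)
    · rw [← hsmul]
      exact Submodule.smul_mem_smul (hIdeal j r hr) Submodule.mem_top
    · exact Submodule.add_mem _ ha hb
  obtain ⟨r', hr'⟩ := (Ideal.mem_iInf_smul_pow_eq_bot_iff
    (Ideal.span {ULift.up.{u₃} x}) (ULift.up.{u₂} s)).mp hmem'
  obtain ⟨q', hq'⟩ := Ideal.mem_span_singleton'.mp r'.2
  refine ⟨q'.down, ?_⟩
  have h1 : (q' * ULift.up.{u₃} x) • ULift.up.{u₂} s = ULift.up.{u₂} s := by rw [hq', hr']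
  have h2 : q' * ULift.up.{u₃} x = ULift.up.{u₃} (q'.down * x) := rfl
  rw [h2, hsmul] at h1
  exact congrArg ULift.down h1

theorem my_aux_reg {k : Type u₁} {R : Type u₂} {N : Type u₃} [Field k] [CharZero k] [CommRing R] [Algebra k R]
    [IsNoetherianRing R] [AddCommGroup N] [Module k N] [Module R N] [IsScalarTower k R N]
    [Module.Finite R N] (x : R) (D : N →ₗ[k] N)
    (hD : ∀ m : N, D (x • m) = x • D m + m) : IsSMulRegular N x := by
  have hcomm : ∀ (c : k) (r : R) (v : N), r • (c • v) = c • (r • v) := by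
    intro c r v
    rw [← algebraMap_smul R c v, ← mul_smul, ← algebraMap_smul R c (r • v), ← mul_smul, mul_comm]
  suffices h : ∀ s : N, x • s = 0 → s = 0 by
    intro a b hab
    have h1 : x • (a - b) = 0 := by
      simp only at hab
      rw [smul_sub, hab, sub_self]
    exact sub_eq_zero.mp (h _ h1)
  intro s hs
  have hpow : ∀ (j : ℕ) (v : N), D (x ^ j • v) = x ^ j • D v + (j : k) • (x ^ (j - 1) • v) := by
    intro j
    induction j with
    | zero => intro v; simp
    | succ j ihj =>
      intro v
      have h1 : x ^ (j + 1) • v = x • (x ^ j • v) := by rw [← mul_smul, ← pow_succ']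
      rw [h1, hD, ihj, smul_add, ← mul_smul, ← pow_succ']
      rcases Nat.eq_zero_or_pos j with rfl | hj
      · simp
      · have hx : x • x ^ (j - 1) • v = x ^ j • v := by
          rw [← mul_smul]
          congr 1
          rw [← pow_succ']
          congr 1
          omega
        rw [hcomm, hx]
        push_cast
        rw [add_smul, one_smul]
        abel
  have hxs : x • D s = -s := by
    have h2 := hD s
    rw [hs, map_zero] at h2
    exact eq_neg_of_add_eq_zero_left h2.symm
  have key : ∀ j : ℕ, x ^ j • (D^[j] s) = ((-1 : k) ^ j * (j.factorial : k)) • s := by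
    intro j
    induction j with
    | zero => simp
    | succ j ihj =>
      have happ := congrArg D ihj
      rw [hpow] at happ
      rw [show D (((-1 : k) ^ j * (j.factorial : k)) • s)
            = ((-1 : k) ^ j * (j.factorial : k)) • D s from D.map_smul _ _] at happ
      have hmul := congrArg (fun w => x • w) happ
      simp only [smul_add] at hmul
      have e1 : x • x ^ j • D (D^[j] s) = x ^ (j + 1) • D (D^[j] s) := by
        rw [← mul_smul, ← pow_succ']
      have e2 : x • (j : k) • (x ^ (j - 1) • D^[j] s)
          = (j : k) • (((-1 : k) ^ j * (j.factorial : k)) • s) := by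
        rcases Nat.eq_zero_or_pos j with rfl | hj
        · simp
        · rw [hcomm]
          congr 1
          rw [← ihj, ← mul_smul]
          congr 1
          rw [← pow_succ']
          congr 1
          omega
      have e3 : x • ((-1 : k) ^ j * (j.factorial : k)) • D s
          = ((-1 : k) ^ j * (j.factorial : k)) • (-s) := by rw [hcomm, hxs]
      rw [e1, e2, e3] at hmul
      rw [Function.iterate_succ_apply']
      have h4 : x ^ (j + 1) • D (D^[j] s)
          = ((-1 : k) ^ j * (j.factorial : k)) • (-s)
            - (j : k) • (((-1 : k) ^ j * (j.factorial : k)) • s) := by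
        rw [← hmul]; abel
      rw [h4, Nat.factorial_succ]
      push_cast
      module
  have hmem : ∀ j : ℕ, s ∈ (Ideal.span {x} ^ j • ⊤ : Submodule R N) := by
    intro j
    have hcj : ((-1 : k) ^ j * (j.factorial : k)) ≠ 0 :=
      mul_ne_zero (pow_ne_zero _ (neg_ne_zero.mpr one_ne_zero))
        (Nat.cast_ne_zero.mpr j.factorial_ne_zero)
    have h5 : s = ((-1 : k) ^ j * (j.factorial : k))⁻¹ • (x ^ j • D^[j] s) := by
      rw [key j, smul_smul, inv_mul_cancel₀ hcj, one_smul]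
    rw [h5]
    have h7 : x ^ j • D^[j] s ∈ (Ideal.span {x} ^ j • ⊤ : Submodule R N) :=
      Submodule.smul_mem_smul (Ideal.pow_mem_pow (Ideal.subset_span (Set.mem_singleton x)) j)
        Submodule.mem_top
    exact Submodule.smul_of_tower_mem _ _ h7
  obtain ⟨q, hq⟩ := my_krull x s hmem
  rw [← hq, mul_smul, hs, smul_zero]

/-- Let `M` be a nonzero `AV`-module over `A = k[x_1, …, x_n]` which is
finitely generated as an `A`-module.  Then `x_1, …, x_n` is an `M`-regular sequence:
each `x_i` acts injectively on `M/(x_1 M + ⋯ + x_{i-1} M)` and `M/(x_1 M + ⋯ + x_n M) ≠ 0`. -/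
theorem av_module_variables_regular_sequence
    (k : Type*) [Field k] [IsAlgClosed k] [CharZero k] (n : ℕ)
    (M : Type*) [AddCommGroup M] [Nontrivial M] [Module k M]
    [Module (MvPolynomial (Fin n) k) M] [IsScalarTower k (MvPolynomial (Fin n) k) M]
    (π : Derivation k (MvPolynomial (Fin n) k) (MvPolynomial (Fin n) k)
        →ₗ⁅k⁆ Module.End k M)
    (hLeibniz : ∀ (η : Derivation k (MvPolynomial (Fin n) k) (MvPolynomial (Fin n) k))
        (f : MvPolynomial (Fin n) k) (m : M),
        π η (f • m) = f • (π η m) + (η f) • m)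
    [Module.Finite (MvPolynomial (Fin n) k) M] :
    RingTheory.Sequence.IsRegular M (List.ofFn fun i : Fin n => (X i : MvPolynomial (Fin n) k)) := by
  set R := MvPolynomial (Fin n) k with hR
  set rs : List R := List.ofFn fun i : Fin n => (X i : R) with hrs
  constructor
  · -- weakly regular
    constructor
    intro i hi
    rw [List.length_ofFn] at hi
    set ii : Fin n := ⟨i, hi⟩ with hii
    have hgetElem : rs[i] = X ii := by
      simp [hrs, List.getElem_ofFn]
      rfl
    rw [hgetElem]
    set J : Ideal R := Ideal.ofList (rs.take i) with hJ
    set p : Submodule R M := J • ⊤ with hp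
    -- J is stable under pderiv ii
    have hder : ∀ r ∈ J, pderiv ii r ∈ J := by
      intro r hr
      induction hr using Submodule.span_induction with
      | mem x hx =>
        obtain ⟨j, hj, hjx⟩ := List.mem_iff_getElem.mp hx
        have hjlt : j < i := by
          have := hj
          simp [hrs] at this
          omega
        have hjn : j < n := lt_trans hjlt hi
        have : (rs.take i)[j] = X (⟨j, hjn⟩ : Fin n) := by
          rw [List.getElem_take]
          simp [hrs, List.getElem_ofFn]
        rw [this] at hjx
        rw [← hjx, pderiv_X_of_ne]
        · exact J.zero_mem
        · intro h
          rw [Fin.ext_iff] at h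
          simp [hii] at h
          omega
      | zero => simpa using J.zero_mem
      | add a b _ _ ha hb => simpa using J.add_mem ha hb
      | smul a x hx hax =>
        rw [smul_eq_mul, Derivation.leibniz]
        refine J.add_mem ?_ ?_
        · rw [smul_eq_mul]; exact J.mul_mem_left a hax
        · rw [smul_eq_mul]; exact J.mul_mem_right _ hx
    -- p is stable under π (pderiv ii)
    have hstab : ∀ m ∈ p.restrictScalars k, (π (pderiv ii)) m ∈ p.restrictScalars k := by
      intro m hm
      simp only [Submodule.restrictScalars_mem] at hm ⊢
      refine Submodule.smul_induction_on hm (fun r hr m' _ => ?_) (fun a b ha hb => ?_)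
      · rw [hLeibniz]
        exact p.add_mem (Submodule.smul_mem_smul hr Submodule.mem_top)
          (Submodule.smul_mem_smul (hder r hr) Submodule.mem_top)
      · rw [map_add]
        exact p.add_mem ha hb
    set D : (M ⧸ p) →ₗ[k] (M ⧸ p) :=
      Submodule.mapQ (p.restrictScalars k) (p.restrictScalars k) (π (pderiv ii))
        (fun m hm => hstab m hm) with hD
    refine my_aux_reg (k := k) (X ii) D ?_
    intro m
    obtain ⟨m₀, rfl⟩ := Submodule.Quotient.mk_surjective p m
    have h1 : (X ii : R) • (Submodule.Quotient.mk m₀ : M ⧸ p) = Submodule.Quotient.mk (X ii • m₀) := rfl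
    have h2 : ∀ w : M, D (Submodule.Quotient.mk w) = Submodule.Quotient.mk (π (pderiv ii) w) :=
      fun w => rfl
    rw [h1, h2, h2, hLeibniz, pderiv_X_self, one_smul]
    rfl
  · -- M/(x_1,…,x_n)M ≠ 0
    intro heq
    have hfg : (⊤ : Submodule R M).FG := Module.Finite.fg_top
    obtain ⟨r, hr1, hr2⟩ :=
      Submodule.exists_sub_one_mem_and_smul_eq_zero_of_fg_of_le_smul
        (Ideal.ofList rs) ⊤ hfg (le_of_eq heq)
    have hrne : r ≠ 0 := by
      have hker : Ideal.ofList rs ≤ RingHom.ker (constantCoeff : R →+* k) := by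
        rw [Ideal.span_le]
        rintro x hx
        obtain ⟨j, rfl⟩ := (List.mem_ofFn (f := fun i : Fin n => (X i : R))).mp hx
        rw [SetLike.mem_coe, RingHom.mem_ker]
        exact constantCoeff_X (R := k) j
      have hcc : constantCoeff r = 1 := by
        have h1 : constantCoeff (r - 1) = 0 := hker hr1
        have h2 : constantCoeff (r - 1) = constantCoeff r - 1 := by
          rw [map_sub, map_one]
        rw [h2, sub_eq_zero] at h1
        exact h1
      intro h0
      rw [h0, map_zero] at hcc
      exact one_ne_zero hcc.symm
    have hcl : ∀ g : R, (∀ m : M, g • m = 0) → ∀ i, ∀ m : M, (pderiv i g) • m = 0 := by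
      intro g hg i m
      have h3 := hLeibniz (pderiv i) g m
      rw [hg m, map_zero, hg ((π (pderiv i)) m), zero_add] at h3
      exact h3.symm
    obtain ⟨c, hc0, hcP⟩ := my_exists_const (fun g => ∀ m : M, g • m = 0) hcl r hrne
      (fun m => hr2 m Submodule.mem_top)
    obtain ⟨m, hm⟩ := exists_ne (0 : M)
    apply hm
    have h4 : (C c : R) • m = 0 := hcP m
    have h5 : (C c : R) = algebraMap k R c := rfl
    rw [h5, algebraMap_smul] at h4
    calc m = c⁻¹ • (c • m) := by rw [smul_smul, inv_mul_cancel₀ hc0, one_smul]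
    _ = 0 := by rw [h4, smul_zero]
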